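/- Let p ≥ 1 be an integer. There exists a constant C ≥ 0 depending only on p such that for every integer k ≥ 2p, |C(k,p)^{-2}·C(k,2p−2)·C(2p−2,p)·C(p,2) − p²(p−1)²/(2k²)| ≤ C/k³, where C(a,b) denotes the binomial coefficient. -/

import Mathlib

open Finset

lemma abs_prod_sub_prod_le (n : ℕ) (x y : ℕ → ℝ) (M B : ℝ) (hM : 0 ≤ M) (hB : 0 ≤ B)
    (hx0 : ∀ i < n, 0 ≤ x i) (hxM : ∀ i < n, x i ≤ M)
    (hy0 : ∀ i < n, 0 ≤ y i) (hyM : ∀ i < n, y i ≤ M)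
    (hd : ∀ i < n, |x i - y i| ≤ B) :
    |(∏ i ∈ range n, x i) - ∏ i ∈ range n, y i| ≤ n * B * M ^ (n - 1) := by
  induction n with
  | zero => simp
  | succ n ih =>
    have hlt : ∀ i, i < n → i < n + 1 := fun i hi => hi.trans (Nat.lt_succ_self n)
    have IH := ih (fun i hi => hx0 i (hlt i hi)) (fun i hi => hxM i (hlt i hi))
      (fun i hi => hy0 i (hlt i hi)) (fun i hi => hyM i (hlt i hi))
      (fun i hi => hd i (hlt i hi))
    have hyn : ∀ i ∈ range n, 0 ≤ y i := fun i hi => hy0 i (hlt i (mem_range.1 hi))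
    have hprodY : (∏ i ∈ range n, y i) ≤ M ^ n := by
      calc (∏ i ∈ range n, y i) ≤ ∏ _i ∈ range n, M :=
            prod_le_prod hyn (fun i hi => hyM i (hlt i (mem_range.1 hi)))
        _ = M ^ n := by simp
    have hprodY0 : 0 ≤ ∏ i ∈ range n, y i := prod_nonneg hyn
    rw [prod_range_succ, prod_range_succ]
    have key : (∏ i ∈ range n, x i) * x n - (∏ i ∈ range n, y i) * y n
        = x n * ((∏ i ∈ range n, x i) - ∏ i ∈ range n, y i)
          + (x n - y n) * (∏ i ∈ range n, y i) := by ring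
    rw [key]
    have h1 : |x n * ((∏ i ∈ range n, x i) - ∏ i ∈ range n, y i)| ≤ M * (n * B * M ^ (n-1)) := by
      rw [abs_mul, abs_of_nonneg (hx0 n (Nat.lt_succ_self n))]
      exact mul_le_mul (hxM n (Nat.lt_succ_self n)) IH (abs_nonneg _) hM
    have h2 : |(x n - y n) * (∏ i ∈ range n, y i)| ≤ B * M ^ n := by
      rw [abs_mul, abs_of_nonneg hprodY0]
      exact mul_le_mul (hd n (Nat.lt_succ_self n)) hprodY hprodY0 hB
    have h3 : M * (n * B * M ^ (n-1)) ≤ n * B * M ^ n := by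
      rcases Nat.eq_zero_or_pos n with h | h
      · subst h; simp
      · have hMM : M * M ^ (n - 1) = M ^ n := by
          rw [← pow_succ']
          congr 1
          omega
        have heq : M * (↑n * B * M ^ (n-1)) = ↑n * B * M ^ n := by
          rw [← hMM]; ring
        exact le_of_eq heq
    refine (abs_add_le _ _).trans ?_
    simp only [Nat.add_sub_cancel]
    push_cast
    nlinarith [pow_nonneg hM n]



/-- Second-order expansion of `C(k,p)⁻² C(k,2p−2) C(2p−2,p) C(p,2)` in
`1/k`: there is a constant `C ≥ 0` depending only on `p` such that for all `k ≥ 2p`,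
`|C(k,p)⁻² C(k,2p−2) C(2p−2,p) C(p,2) − p²(p−1)²/(2k²)| ≤ C/k³`. -/
theorem stmt18 (p : ℕ) (hp : 1 ≤ p) :
    ∃ C : ℝ, 0 ≤ C ∧ ∀ k : ℕ, 2 * p ≤ k →
      |((k.choose p : ℝ) ^ 2)⁻¹ * (k.choose (2 * p - 2) : ℝ) *
            ((2 * p - 2).choose p : ℝ) * (p.choose 2 : ℝ)
          - (p : ℝ) ^ 2 * ((p : ℝ) - 1) ^ 2 / (2 * (k : ℝ) ^ 2)|
        ≤ C / (k : ℝ) ^ 3 := by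
  rcases eq_or_lt_of_le hp with h1 | h2
  · -- p = 1
    refine ⟨0, le_rfl, fun k hk => ?_⟩
    subst h1
    norm_num [show Nat.choose 1 2 = 0 from rfl]
  · -- p ≥ 2
    obtain ⟨m, rfl⟩ : ∃ m, p = m + 2 := ⟨p - 2, by omega⟩
    set A : ℝ := ((m : ℝ) + 2) ^ 2 * ((m : ℝ) + 1) ^ 2 / 2 with hA
    set B : ℝ := 2 * ((m : ℝ) + 2) with hB
    refine ⟨A * (((m : ℝ) + 2) * B * 2 ^ (m + 2)), by positivity, fun k hk => ?_⟩
    have hk4 : 2 * m + 4 ≤ k := by omega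
    have hk0 : (0 : ℝ) < (k : ℝ) := by
      have : 0 < k := by omega
      exact_mod_cast this
    -- combinatorial identity
    have hid : k.choose (2 * m + 2) * (2 * m + 2).choose (m + 2)
        = k.choose (m + 2) * (k - (m + 2)).choose m := by
      have h := Nat.choose_mul (n := k) (k := 2 * m + 2) (s := m + 2)
        (by omega)
      simpa [show 2 * m + 2 - (m + 2) = m by omega] using h
    have h2p2 : 2 * (m + 2) - 2 = 2 * m + 2 := by omega
    -- real abbreviations
    set c : ℝ := (k.choose (m + 2) : ℝ) with hc
    set c' : ℝ := ((k - (m + 2)).choose m : ℝ) with hc'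
    set Nd : ℝ := ((k - (m + 2)).descFactorial m : ℝ) with hNdDef
    set Dd : ℝ := (k.descFactorial (m + 2) : ℝ) with hDdDef
    have hcpos : 0 < c := by
      rw [hc]
      have : 0 < k.choose (m + 2) := Nat.choose_pos (by omega)
      exact_mod_cast this
    have hfmpos : (0:ℝ) < (Nat.factorial m : ℝ) := by exact_mod_cast m.factorial_pos
    have hNd : Nd = (Nat.factorial m : ℝ) * c' := by
      rw [hNdDef, hc', Nat.descFactorial_eq_factorial_mul_choose]
      push_cast; ring
    have hDd : Dd = ((m:ℝ)+2) * ((m:ℝ)+1) * (Nat.factorial m : ℝ) * c := by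
      rw [hDdDef, hc, Nat.descFactorial_eq_factorial_mul_choose]
      have : Nat.factorial (m + 2) = (m+2) * ((m+1) * Nat.factorial m) := by
        rw [Nat.factorial_succ, Nat.factorial_succ]
      rw [this]; push_cast; ring
    have hch2 : ((m+2).choose 2 : ℝ) = ((m:ℝ)+2) * ((m:ℝ)+1) / 2 := by
      rw [Nat.cast_choose_two]; push_cast; ring
    -- rewrite the main expression
    have hidR : (k.choose (2 * m + 2) : ℝ) * ((2 * m + 2).choose (m + 2) : ℝ) = c * c' := by
      rw [hc, hc']; exact_mod_cast hid
    have hE : ((c ^ 2)⁻¹ * (k.choose (2 * m + 2) : ℝ) *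
          ((2 * m + 2).choose (m + 2) : ℝ) * ((m+2).choose 2 : ℝ))
        - ((m + 2 : ℕ) : ℝ) ^ 2 * (((m + 2 : ℕ) : ℝ) - 1) ^ 2 / (2 * (k : ℝ) ^ 2)
        = A * ((k:ℝ)^2 * Nd - Dd) / ((k:ℝ)^2 * Dd) := by
      rw [hNd, hDd, hch2, hA]
      push_cast
      have h1 : (c^2)⁻¹ * (k.choose (2 * m + 2) : ℝ) * ((2 * m + 2).choose (m + 2) : ℝ)
          = c' / c := by
        rw [mul_assoc, hidR]
        field_simp
      rw [h1]
      field_simp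
      ring
    -- product formulas
    set x : ℕ → ℝ := fun i => if i < 2 then (k:ℝ) else (k:ℝ) - ((m:ℝ)+2) - ((i - 2 : ℕ) : ℝ)
      with hx
    set y : ℕ → ℝ := fun i => (k:ℝ) - (i : ℝ) with hy
    have hNdProd : (k:ℝ)^2 * Nd = ∏ i ∈ range (m + 2), x i := by
      rw [show m + 2 = 2 + m by omega, prod_range_add]
      have h0 : ∏ i ∈ range 2, x i = (k:ℝ)^2 := by
        simp [hx, prod_range_succ]
        ring
      rw [h0]
      congr 1
      rw [hNdDef, Nat.descFactorial_eq_prod_range]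
      push_cast [Nat.cast_prod]
      refine Finset.prod_congr rfl fun i hi => ?_
      have hi' : i < m := mem_range.1 hi
      have hsub1 : (((k - (m + 2) - i : ℕ)) : ℝ) = ((k - (m+2) : ℕ) : ℝ) - (i : ℝ) := by
        have : i ≤ k - (m + 2) := by omega
        push_cast [Nat.cast_sub this]
        ring
      have hsub2 : ((k - (m+2) : ℕ) : ℝ) = (k : ℝ) - ((m:ℝ) + 2) := by
        have : m + 2 ≤ k := by omega
        push_cast [Nat.cast_sub this]
        ring
      have hif : x (2 + i) = (k:ℝ) - ((m:ℝ)+2) - (i : ℝ) := by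
        simp [hx, show ¬ (2 + i < 2) by omega, show 2 + i - 2 = i by omega]
        intro h; exact absurd h (by omega)
      rw [hif, hsub1, hsub2]
    have hDdProd : Dd = ∏ i ∈ range (m + 2), y i := by
      rw [hDdDef, Nat.descFactorial_eq_prod_range]
      push_cast [Nat.cast_prod]
      refine Finset.prod_congr rfl fun i hi => ?_
      have hi' : i < m + 2 := mem_range.1 hi
      have : i ≤ k := by omega
      simp only [hy]
      exact Nat.cast_sub this
    -- bounds for the product lemma
    have hxb : ∀ i < m + 2, 0 ≤ x i ∧ x i ≤ (k:ℝ) := by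
      intro i hi
      by_cases h2i : i < 2
      · have hxi : x i = (k:ℝ) := by
          simp [hx, h2i]
          intro h; exact absurd h (by omega)
        rw [hxi]
        exact ⟨le_of_lt hk0, le_refl _⟩
      · have hc1 : ((i - 2 : ℕ) : ℝ) ≤ (m:ℝ) - 1 + 1 := by
          have : (i - 2 : ℕ) ≤ m := by omega
          have := (Nat.cast_le (α := ℝ)).2 this
          push_cast at this ⊢
          linarith
        have hc0 : (0:ℝ) ≤ ((i - 2 : ℕ) : ℝ) := Nat.cast_nonneg _
        have hkk : (2 * m + 4 : ℝ) ≤ (k : ℝ) := by exact_mod_cast hk4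
        have hxi : x i = (k:ℝ) - ((m:ℝ)+2) - ((i - 2 : ℕ) : ℝ) := by
          simp [hx, h2i]
          intro h; exact absurd h (by omega)
        rw [hxi]
        constructor
        · linarith
        · linarith
    have hyb : ∀ i < m + 2, 0 ≤ y i ∧ y i ≤ (k:ℝ) := by
      intro i hi
      have hi' : (i:ℝ) ≤ (m:ℝ) + 1 := by
        have : i ≤ m + 1 := by omega
        exact_mod_cast this
      have hkk : (2 * m + 4 : ℝ) ≤ (k : ℝ) := by exact_mod_cast hk4
      have hi0 : (0:ℝ) ≤ (i:ℝ) := Nat.cast_nonneg _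
      constructor
      · simp only [hy]; linarith
      · simp only [hy]; linarith
    have hdb : ∀ i < m + 2, |x i - y i| ≤ B := by
      intro i hi
      by_cases h2i : i < 2
      · have hi1 : (i:ℝ) ≤ 1 := by
          have : i ≤ 1 := by omega
          exact_mod_cast this
        have hi0 : (0:ℝ) ≤ (i:ℝ) := Nat.cast_nonneg _
        simp only [hx, hy, if_pos h2i, hB]
        rw [show (k:ℝ) - ((k:ℝ) - (i:ℝ)) = (i:ℝ) by ring, abs_of_nonneg hi0]
        linarith
      · have hcast : ((i - 2 : ℕ) : ℝ) = (i:ℝ) - 2 := by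
          have : 2 ≤ i := by omega
          push_cast [Nat.cast_sub this]
          ring
        simp only [hx, hy, if_neg h2i, hB, hcast]
        rw [show (k:ℝ) - ((m:ℝ)+2) - ((i:ℝ) - 2) - ((k:ℝ) - (i:ℝ)) = -(m:ℝ) by ring]
        rw [abs_neg, abs_of_nonneg (Nat.cast_nonneg m)]
        linarith
    have hBpos : (0:ℝ) ≤ B := by rw [hB]; positivity
    have hnum : |(k:ℝ)^2 * Nd - Dd| ≤ ((m:ℝ)+2) * B * (k:ℝ) ^ (m+1) := by
      rw [hNdProd, hDdProd]
      have := abs_prod_sub_prod_le (m+2) x y (k:ℝ) B (le_of_lt hk0) hBpos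
        (fun i hi => (hxb i hi).1) (fun i hi => (hxb i hi).2)
        (fun i hi => (hyb i hi).1) (fun i hi => (hyb i hi).2) hdb
      simpa [show m + 2 - 1 = m + 1 by omega] using this
    -- lower bound on Dd
    have hDdlow : ((k:ℝ)/2) ^ (m+2) ≤ Dd := by
      rw [hDdProd]
      calc ((k:ℝ)/2) ^ (m+2) = ∏ _i ∈ range (m+2), ((k:ℝ)/2) := by rw [prod_const, card_range]
        _ ≤ ∏ i ∈ range (m+2), y i := by
            refine prod_le_prod (fun i _ => by positivity) (fun i hi => ?_)
            have hi' : i < m + 2 := mem_range.1 hi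
            have hii : (i:ℝ) ≤ (m:ℝ) + 1 := by exact_mod_cast (by omega : i ≤ m + 1)
            have hkk : (2 * m + 4 : ℝ) ≤ (k : ℝ) := by exact_mod_cast hk4
            simp only [hy]
            linarith
    have hDdpos : (0:ℝ) < Dd := lt_of_lt_of_le (by positivity) hDdlow
    have hApos : (0:ℝ) ≤ A := by rw [hA]; positivity
    -- put it together
    rw [h2p2, hE, abs_div, abs_mul, abs_of_nonneg hApos,
      abs_of_pos (by positivity : (0:ℝ) < (k:ℝ)^2 * Dd), mul_div_assoc]
    have hfrac : |(k:ℝ)^2 * Nd - Dd| / ((k:ℝ)^2 * Dd)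
        ≤ (((m:ℝ)+2) * B * (k:ℝ)^(m+1)) / ((k:ℝ)^2 * ((k:ℝ)/2)^(m+2)) := by
      refine div_le_div₀ (by positivity) hnum (by positivity) ?_
      exact mul_le_mul_of_nonneg_left hDdlow (by positivity)
    have hfinal : A * ((((m:ℝ)+2) * B * (k:ℝ)^(m+1)) / ((k:ℝ)^2 * ((k:ℝ)/2)^(m+2)))
        = A * (((m : ℝ) + 2) * B * 2 ^ (m + 2)) / (k:ℝ)^3 := by
      rw [div_pow]
      field_simp
      ring
    calc A * (|(k:ℝ)^2 * Nd - Dd| / ((k:ℝ)^2 * Dd))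
        ≤ A * ((((m:ℝ)+2) * B * (k:ℝ)^(m+1)) / ((k:ℝ)^2 * ((k:ℝ)/2)^(m+2))) :=
          mul_le_mul_of_nonneg_left hfrac hApos
      _ = A * (((m : ℝ) + 2) * B * 2 ^ (m + 2)) / (k:ℝ)^3 := hfinal
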